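/- arXiv:2310.17759 — 3 statements merged into one kernel-verified Lean document; each statement's English description precedes it below -/
import Mathlib

section
/- Let E and E' be real Hilbert spaces, X ⊆ E and Y ⊆ E' nonempty closed convex sets, and f : E × E' → ℝ a function that is μ-strongly-convex–strongly-concave on X × Y and whose saddle operator G(x,y) = (∇_x f(x,y), −∇_y f(x,y)) is ℓ-Lipschitz on X × Y, with 0 < μ ≤ ℓ. Let z* ∈ X × Y be a saddle point of f on X × Y, and set κ = ℓ/μ. Let δ ≥ 0 and let g̃ : E × E' → E × E' satisfy ‖g̃(z) − G(z)‖ ≤ δ for all z ∈ X × Y. Fix z₀ ∈ X × Y, set α = μ/(4ℓ²), and define the Inexact-GDA iterates z_{t+1} = Π_{X×Y}(z_t − α·g̃(z_t)) for t = 0, …, T−1. Then ‖z_T − z*‖² ≤ exp(−T/(8κ²))·‖z₀ − z*‖² + (1/ℓ² + 2/μ²)·δ². -/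
open RealInnerProductSpace

noncomputable section

variable {E E' : Type*} [NormedAddCommGroup E] [InnerProductSpace ℝ E] [CompleteSpace E]
  [NormedAddCommGroup E'] [InnerProductSpace ℝ E'] [CompleteSpace E']

/-- The saddle operator `G(x,y) = (∇ₓ f(x,y), −∇_y f(x,y))` on the Hilbert product
`WithLp 2 (E × E')`. -/
def saddleOp (f : E × E' → ℝ) (z : WithLp 2 (E × E')) : WithLp 2 (E × E') :=
  (WithLp.equiv 2 (E × E')).symm
    (gradient (fun u => f (u, (WithLp.equiv 2 (E × E') z).2)) (WithLp.equiv 2 (E × E') z).1,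
     -gradient (fun v => f ((WithLp.equiv 2 (E × E') z).1, v)) (WithLp.equiv 2 (E × E') z).2)

/-- `X × Y` as a subset of the Hilbert product. -/
def prodSet (X : Set E) (Y : Set E') : Set (WithLp 2 (E × E')) :=
  (WithLp.equiv 2 (E × E')) ⁻¹' (X ×ˢ Y)

/-- `p` is the metric projection of `v` onto `S`. -/
def IsProjOn {H : Type*} [NormedAddCommGroup H] (S : Set H) (v p : H) : Prop :=
  p ∈ S ∧ ∀ w ∈ S, ‖v - p‖ ≤ ‖v - w‖

section AuxLemmas

lemma deriv_le_of_le_slope {g : ℝ → ℝ} {d c : ℝ} (hg : HasDerivAt g d 0)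
    (h : ∀ t ∈ Set.Ioc (0:ℝ) 1, g t - g 0 ≤ t * c) : d ≤ c := by
  have ht : Filter.Tendsto (slope g 0) (nhdsWithin 0 (Set.Ioi 0)) (nhds d) :=
    (hasDerivAt_iff_tendsto_slope.1 hg).mono_left
      (nhdsWithin_mono 0 (fun t ht => Set.mem_compl_singleton_iff.2 (ne_of_gt ht)))
  refine le_of_tendsto ht ?_
  filter_upwards [Ioc_mem_nhdsGT_of_mem (by simp : (0:ℝ) ∈ Set.Ico 0 1)] with t htt
  rw [slope_def_field, sub_zero, div_le_iff₀ htt.1]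
  linarith [h t htt]

lemma hasDerivAt_normsq_line (x v : E) :
    HasDerivAt (fun t : ℝ => ‖x + t • v‖^2) (2 * ⟪x, v⟫) 0 := by
  have h1 : HasDerivAt (fun t : ℝ => x + t • v) v 0 := by
    simpa using ((hasDerivAt_id (0:ℝ)).smul_const v).const_add x
  have := h1.inner ℝ h1
  simp only [zero_smul, add_zero] at this
  have heq : (fun t : ℝ => ‖x + t • v‖^2) = fun t => ⟪x + t • v, x + t • v⟫ := by
    funext t; rw [real_inner_self_eq_norm_sq]
  rw [heq]
  exact this.congr_deriv (by rw [real_inner_comm]; ring)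

lemma convex_grad_ineq {X : Set E} {h : E → ℝ} (hc : ConvexOn ℝ X h)
    {x y : E} (hx : x ∈ X) (hy : y ∈ X) {d : ℝ}
    (hd : HasDerivAt (fun t : ℝ => h (x + t • (y - x))) d 0) : d ≤ h y - h x := by
  refine deriv_le_of_le_slope hd (fun t ht => ?_)
  have heq : x + t • (y - x) = (1 - t) • x + t • y := by module
  have h1t : (0:ℝ) ≤ 1 - t := by linarith [ht.2]
  have := hc.2 hx hy h1t (le_of_lt ht.1) (by ring : (1 - t) + t = 1)
  rw [heq]
  have h00 : h (x + (0:ℝ) • (y - x)) = h x := by simp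
  rw [show x + (0:ℝ) • (y - x) = x by simp]
  simp only [smul_eq_mul] at this
  nlinarith [this]

lemma deriv_nonneg_of_isMinOn {X : Set E} (hX : Convex ℝ X) {h : E → ℝ}
    {x w : E} (hx : x ∈ X) (hw : w ∈ X) (hmin : ∀ u ∈ X, h x ≤ h u)
    {d : ℝ} (hd : HasDerivAt (fun t : ℝ => h (x + t • (w - x))) d 0) : 0 ≤ d := by
  have key : -d ≤ 0 := by
    refine deriv_le_of_le_slope hd.neg (fun t ht => ?_)
    have hmem : x + t • (w - x) ∈ X := by
      have h1t : (0:ℝ) ≤ 1 - t := by linarith [ht.2]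
      have := hX hx hw h1t (le_of_lt ht.1) (by ring : (1 - t) + t = 1)
      have heq : x + t • (w - x) = (1 - t) • x + t • w := by module
      rwa [heq]
    have := hmin _ hmem
    simp only [Pi.neg_apply, zero_smul, add_zero, mul_zero]
    linarith
  linarith

lemma hasDerivAt_comp_line' {h : E → ℝ} {g x : E} (v : E) (hg : HasGradientAt h g x) :
    HasDerivAt (fun t : ℝ => h (x + t • v)) ⟪g, v⟫ 0 := by
  have h1 : HasDerivAt (fun t : ℝ => x + t • v) v 0 := by
    simpa using ((hasDerivAt_id (0:ℝ)).smul_const v).const_add x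
  have h2 := hg.hasFDerivAt
  rw [show x = x + (0:ℝ) • v by simp] at h2
  have h3 := h2.comp_hasDerivAt 0 h1
  exact h3

lemma HasGradientAt.neg' {h : E → ℝ} {g x : E} (hg : HasGradientAt h g x) :
    HasGradientAt (fun u => -h u) (-g) x := by
  rw [hasGradientAt_iff_hasFDerivAt] at hg ⊢
  rw [map_neg]; exact hg.neg

lemma strongConvexOn_grad_ineq {X : Set E} {h : E → ℝ} {μ : ℝ}
    (hc : ConvexOn ℝ X (fun x => h x - μ / 2 * ‖x‖ ^ 2)) {x₁ x₂ g₁ : E}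
    (h1 : x₁ ∈ X) (h2 : x₂ ∈ X) (hg : HasGradientAt h g₁ x₁) :
    h x₁ + ⟪g₁, x₂ - x₁⟫ + μ / 2 * ‖x₂ - x₁‖ ^ 2 ≤ h x₂ := by
  have hline := (hasDerivAt_comp_line' (x₂ - x₁) hg).sub
    (HasDerivAt.const_mul (μ / 2) (hasDerivAt_normsq_line x₁ (x₂ - x₁)))
  have hkey := convex_grad_ineq hc h1 h2 hline
  have e1 : ⟪x₁, x₂ - x₁⟫ = ⟪x₁, x₂⟫ - ‖x₁‖ ^ 2 := by
    rw [inner_sub_right, real_inner_self_eq_norm_sq]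
  have e2 := norm_sub_sq_real x₂ x₁
  have e3 : ⟪x₂, x₁⟫ = ⟪x₁, x₂⟫ := (real_inner_comm x₂ x₁).symm
  have key2 : μ / 2 * ‖x₂ - x₁‖ ^ 2
      = μ / 2 * ‖x₂‖ ^ 2 - μ / 2 * ‖x₁‖ ^ 2 - μ * ⟪x₁, x₂ - x₁⟫ := by
    rw [e2, e1, e3]; ring
  linarith [hkey, key2]

lemma grad_inner_nonneg_of_isMinOn {X : Set E} (hX : Convex ℝ X) {h : E → ℝ} {x w g : E}
    (hx : x ∈ X) (hw : w ∈ X) (hmin : ∀ u ∈ X, h x ≤ h u) (hg : HasGradientAt h g x) :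
    0 ≤ ⟪g, w - x⟫ :=
  deriv_nonneg_of_isMinOn hX hx hw hmin (hasDerivAt_comp_line' (w - x) hg)

lemma young_sq {β M c : ℝ} (hβ : 0 < β) :
    (M + c)^2 ≤ (1 + β) * M^2 + (1 + 1/β) * c^2 := by
  have key : (1 + β) * M^2 + (1 + 1/β) * c^2 - (M + c)^2 = (β*M - c)^2/β := by
    field_simp; ring
  linarith [key, div_nonneg (sq_nonneg (β*M - c)) hβ.le]

end AuxLemmas

set_option maxHeartbeats 1000000 in
/-- Lemma C.1: Inexact-GDA for strongly-convex–strongly-concave problems.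
With `κ = ℓ/μ`, stepsize `α = μ/(4ℓ²)` and a `δ`-inexact gradient oracle `g̃`, the GDA
iterates `z_{t+1} = Π_{X×Y}(z_t − α g̃(z_t))` satisfy
`‖z_T − z*‖² ≤ exp(−T/(8κ²))·‖z₀ − z*‖² + (1/ℓ² + 2/μ²)·δ²`. -/
theorem inexact_gda_scsc_convergence
    (X : Set E) (Y : Set E') (hXne : X.Nonempty) (hYne : Y.Nonempty)
    (hXcl : IsClosed X) (hYcl : IsClosed Y) (hXcv : Convex ℝ X) (hYcv : Convex ℝ Y)
    (f : E × E' → ℝ) (μ ℓ : ℝ) (hμ : 0 < μ) (hμℓ : μ ≤ ℓ)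
    (hdx : ∀ x ∈ X, ∀ y ∈ Y, DifferentiableAt ℝ (fun u => f (u, y)) x)
    (hdy : ∀ x ∈ X, ∀ y ∈ Y, DifferentiableAt ℝ (fun v => f (x, v)) y)
    (hscx : ∀ y ∈ Y, ConvexOn ℝ X (fun x => f (x, y) - μ / 2 * ‖x‖ ^ 2))
    (hscy : ∀ x ∈ X, ConvexOn ℝ Y (fun y => -f (x, y) - μ / 2 * ‖y‖ ^ 2))
    (hlip : ∀ z₁ ∈ prodSet X Y, ∀ z₂ ∈ prodSet X Y,
      ‖saddleOp f z₁ - saddleOp f z₂‖ ≤ ℓ * ‖z₁ - z₂‖)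
    (zs : WithLp 2 (E × E')) (hzsS : zs ∈ prodSet X Y)
    (hsaddle : ∀ x ∈ X, ∀ y ∈ Y,
      f ((WithLp.equiv 2 (E × E') zs).1, y) ≤ f (WithLp.equiv 2 (E × E') zs) ∧
      f (WithLp.equiv 2 (E × E') zs) ≤ f (x, (WithLp.equiv 2 (E × E') zs).2))
    (κ : ℝ) (hκ : κ = ℓ / μ)
    (δ : ℝ) (hδ : 0 ≤ δ)
    (gt : WithLp 2 (E × E') → WithLp 2 (E × E'))
    (hgt : ∀ z ∈ prodSet X Y, ‖gt z - saddleOp f z‖ ≤ δ)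
    (α : ℝ) (hα : α = μ / (4 * ℓ ^ 2))
    (T : ℕ) (z : ℕ → WithLp 2 (E × E')) (hz0 : z 0 ∈ prodSet X Y)
    (hupd : ∀ t < T, IsProjOn (prodSet X Y) (z t - α • gt (z t)) (z (t + 1))) :
    ‖z T - zs‖ ^ 2 ≤
      Real.exp (-(T : ℝ) / (8 * κ ^ 2)) * ‖z 0 - zs‖ ^ 2 +
        (1 / ℓ ^ 2 + 2 / μ ^ 2) * δ ^ 2 := by
  have hℓ : 0 < ℓ := lt_of_lt_of_le hμ hμℓ
  have hℓ2 : (0:ℝ) < ℓ^2 := by positivity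
  -- basic structure of the constraint set
  have hmem : ∀ w : WithLp 2 (E × E'), w ∈ prodSet X Y ↔ w.fst ∈ X ∧ w.snd ∈ Y := by
    intro w
    rw [prodSet, Set.mem_preimage, Set.mem_prod]; exact Iff.rfl
  have memX : ∀ w, w ∈ prodSet X Y → w.fst ∈ X := fun w hw => ((hmem w).1 hw).1
  have memY : ∀ w, w ∈ prodSet X Y → w.snd ∈ Y := fun w hw => ((hmem w).1 hw).2
  have hSconv : Convex ℝ (prodSet X Y) := by
    intro a ha b hb sc tc hsc htc hst
    rw [hmem]
    rw [WithLp.add_fst, WithLp.add_snd, WithLp.smul_fst, WithLp.smul_fst,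
      WithLp.smul_snd, WithLp.smul_snd]
    exact ⟨hXcv (memX a ha) (memX b hb) hsc htc hst,
      hYcv (memY a ha) (memY b hb) hsc htc hst⟩
  have hGfst : ∀ w : WithLp 2 (E × E'),
      (saddleOp f w).fst = gradient (fun u => f (u, w.snd)) w.fst := by
    intro w
    rfl
  have hGsnd : ∀ w : WithLp 2 (E × E'),
      (saddleOp f w).snd = -gradient (fun v => f (w.fst, v)) w.snd := by
    intro w
    rfl
  have hzs_eq : WithLp.equiv 2 (E × E') zs = (zs.fst, zs.snd) :=
    rfl
  -- projection characterization
  have hprojchar : ∀ v p, IsProjOn (prodSet X Y) v p →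
      ∀ w ∈ prodSet X Y, ⟪v - p, w - p⟫ ≤ 0 := by
    intro v p hp w hw
    haveI : Nonempty (prodSet X Y) := ⟨⟨p, hp.1⟩⟩
    have heq : ‖v - p‖ = ⨅ w : prodSet X Y, ‖v - w‖ := by
      refine le_antisymm (le_ciInf fun w => hp.2 w w.2) (ciInf_le (f := fun w : prodSet X Y => ‖v - (w : WithLp 2 (E × E'))‖) ⟨0, ?_⟩ ⟨p, hp.1⟩)
      rintro _ ⟨w, rfl⟩; exact norm_nonneg _
    exact (norm_eq_iInf_iff_real_inner_le_zero hSconv hp.1).1 heq w hw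
  -- strong convexity inequalities
  have SCX : ∀ y ∈ Y, ∀ x₁ ∈ X, ∀ x₂ ∈ X,
      f (x₁, y) + ⟪gradient (fun u => f (u, y)) x₁, x₂ - x₁⟫
        + μ/2 * ‖x₂ - x₁‖^2 ≤ f (x₂, y) := by
    intro y hy x₁ h1 x₂ h2
    exact strongConvexOn_grad_ineq (hscx y hy) h1 h2 ((hdx x₁ h1 y hy).hasGradientAt)
  have SCY : ∀ x ∈ X, ∀ y₁ ∈ Y, ∀ y₂ ∈ Y,
      (-f (x, y₁)) + ⟪-gradient (fun v => f (x, v)) y₁, y₂ - y₁⟫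
        + μ/2 * ‖y₂ - y₁‖^2 ≤ -f (x, y₂) := by
    intro x hx y₁ h1 y₂ h2
    exact strongConvexOn_grad_ineq (hscy x hx) h1 h2 ((hdy x hx y₁ h1).hasGradientAt.neg')
  -- strong monotonicity of the saddle operator
  have MONO : ∀ z₁ ∈ prodSet X Y, ∀ z₂ ∈ prodSet X Y,
      μ * ‖z₁ - z₂‖^2 ≤ ⟪saddleOp f z₁ - saddleOp f z₂, z₁ - z₂⟫ := by
    intro z₁ hz₁ z₂ hz₂
    have A := SCX z₁.snd (memY _ hz₁) z₁.fst (memX _ hz₁) z₂.fst (memX _ hz₂)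
    have B := SCX z₂.snd (memY _ hz₂) z₂.fst (memX _ hz₂) z₁.fst (memX _ hz₁)
    have C := SCY z₁.fst (memX _ hz₁) z₁.snd (memY _ hz₁) z₂.snd (memY _ hz₂)
    have D := SCY z₂.fst (memX _ hz₂) z₂.snd (memY _ hz₂) z₁.snd (memY _ hz₁)
    rw [norm_sub_rev] at A C
    have hin : ⟪saddleOp f z₁ - saddleOp f z₂, z₁ - z₂⟫
        = (⟪gradient (fun u => f (u, z₁.snd)) z₁.fst, z₁.fst - z₂.fst⟫
            - ⟪gradient (fun u => f (u, z₂.snd)) z₂.fst, z₁.fst - z₂.fst⟫)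
          + (⟪-gradient (fun v => f (z₁.fst, v)) z₁.snd, z₁.snd - z₂.snd⟫
            - ⟪-gradient (fun v => f (z₂.fst, v)) z₂.snd, z₁.snd - z₂.snd⟫) := by
      rw [WithLp.prod_inner_apply, WithLp.ofLp_fst, WithLp.ofLp_snd, WithLp.ofLp_fst, WithLp.ofLp_snd, WithLp.sub_fst, WithLp.sub_snd, WithLp.sub_fst,
        WithLp.sub_snd, hGfst, hGfst, hGsnd, hGsnd, inner_sub_left, inner_sub_left]
    have hnrm : ‖z₁ - z₂‖^2 = ‖z₁.fst - z₂.fst‖^2 + ‖z₁.snd - z₂.snd‖^2 := by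
      rw [WithLp.prod_norm_sq_eq_of_L2, WithLp.sub_fst, WithLp.sub_snd]
    have flip1 : ⟪gradient (fun u => f (u, z₁.snd)) z₁.fst, z₁.fst - z₂.fst⟫
        = -⟪gradient (fun u => f (u, z₁.snd)) z₁.fst, z₂.fst - z₁.fst⟫ := by
      rw [← inner_neg_right, neg_sub]
    have flip3 : ⟪-gradient (fun v => f (z₁.fst, v)) z₁.snd, z₁.snd - z₂.snd⟫
        = -⟪-gradient (fun v => f (z₁.fst, v)) z₁.snd, z₂.snd - z₁.snd⟫ := by
      rw [← inner_neg_right, neg_sub]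
    rw [hin, hnrm]
    linarith only [A, B, C, D, flip1, flip3]
  -- variational inequality at the saddle point
  have VI : ∀ w ∈ prodSet X Y, 0 ≤ ⟪saddleOp f zs, w - zs⟫ := by
    intro w hw
    have hxs := memX zs hzsS
    have hys := memY zs hzsS
    have hx : 0 ≤ ⟪gradient (fun u => f (u, zs.snd)) zs.fst, w.fst - zs.fst⟫ := by
      refine grad_inner_nonneg_of_isMinOn hXcv hxs (memX w hw) (fun u hu => ?_)
        ((hdx zs.fst hxs zs.snd hys).hasGradientAt)
      have h2 := (hsaddle u hu zs.snd hys).2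
      rw [hzs_eq] at h2
      exact h2
    have hy : 0 ≤ ⟪-gradient (fun v => f (zs.fst, v)) zs.snd, w.snd - zs.snd⟫ := by
      refine grad_inner_nonneg_of_isMinOn hYcv hys (memY w hw) (fun v hv => ?_)
        ((hdy zs.fst hxs zs.snd hys).hasGradientAt.neg')
      have h1 := (hsaddle zs.fst hxs v hv).1
      rw [hzs_eq] at h1
      exact neg_le_neg h1
    have hsum : ⟪saddleOp f zs, w - zs⟫
        = ⟪gradient (fun u => f (u, zs.snd)) zs.fst, w.fst - zs.fst⟫
          + ⟪-gradient (fun v => f (zs.fst, v)) zs.snd, w.snd - zs.snd⟫ := by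
      rw [WithLp.prod_inner_apply, WithLp.ofLp_fst, WithLp.ofLp_snd, WithLp.ofLp_fst, WithLp.ofLp_snd, WithLp.sub_fst, WithLp.sub_snd, hGfst, hGsnd]
    rw [hsum]; linarith
  -- numeric setup
  set s : ℝ := μ^2/ℓ^2 with hs
  have hs0 : 0 < s := by positivity
  have hs1 : s ≤ 1 := by rw [hs, div_le_one hℓ2]; nlinarith only [hμ, hμℓ]
  set q : ℝ := 1 - (7/16)*s with hq
  set r : ℝ := (1 + s/8) * q with hr
  set Cst : ℝ := (1 + 8/s) * (α*δ)^2 with hCst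
  have hq0 : 0 < q := by rw [hq]; linarith only [hs0, hs1]
  have hr0 : 0 < r := by rw [hr, hq]; nlinarith only [hs0, hs1]
  have hr1 : 5*s/16 ≤ 1 - r := by rw [hr, hq]; nlinarith only [hs0, sq_nonneg s]
  have h1r : 0 < 1 - r := lt_of_lt_of_le (by positivity) hr1
  have hα0 : 0 < α := by rw [hα]; positivity
  have hC0 : 0 ≤ Cst := by
    rw [hCst]
    have : (0:ℝ) ≤ 1 + 8/s := by positivity
    positivity
  -- iterates stay in the set
  have hzS : ∀ t, t ≤ T → z t ∈ prodSet X Y := by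
    intro t
    induction t with
    | zero => intro _; exact hz0
    | succ n _ => intro h; exact (hupd n (Nat.lt_of_succ_le h)).1
  -- one-step inequality
  have step : ∀ t, t < T → ‖z (t+1) - zs‖^2 ≤ r * ‖z t - zs‖^2 + Cst := by
    intro t ht
    have hztS := hzS t (le_of_lt ht)
    have hzt1S := (hupd t ht).1
    set p := z (t+1) with hp
    set v := z t - α • gt (z t) with hv
    have hchar : ⟪v - p, zs - p⟫ ≤ 0 := hprojchar _ _ (hupd t ht) zs hzsS
    have hvi : 0 ≤ ⟪saddleOp f zs, p - zs⟫ := VI p hzt1S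
    set u := (z t - zs) - α • (gt (z t) - saddleOp f zs) with hu
    have hkey1 : ‖p - zs‖^2 ≤ ‖u‖ * ‖p - zs‖ := by
      have e1 : ‖p - zs‖^2 = ⟪p - zs, p - zs⟫ := (real_inner_self_eq_norm_sq _).symm
      have e2 : ⟪p - zs, p - zs⟫ = ⟪p - v, p - zs⟫ + ⟪v - zs, p - zs⟫ := by
        rw [← inner_add_left]
        congr 1
        abel
      have e3 : ⟪p - v, p - zs⟫ = ⟪v - p, zs - p⟫ := by
        rw [show p - v = -(v - p) from (neg_sub v p).symm,
          show p - zs = -(zs - p) from (neg_sub zs p).symm, inner_neg_neg]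
      have huv : u = (v - zs) + α • saddleOp f zs := by rw [hu, hv]; module
      have e4 : ⟪u, p - zs⟫ = ⟪v - zs, p - zs⟫ + α * ⟪saddleOp f zs, p - zs⟫ := by
        rw [huv, inner_add_left, real_inner_smul_left]
      have e5 : ⟪u, p - zs⟫ ≤ ‖u‖ * ‖p - zs‖ := real_inner_le_norm _ _
      have e6 : 0 ≤ α * ⟪saddleOp f zs, p - zs⟫ := mul_nonneg hα0.le hvi
      rw [e1, e2, e3]
      linarith only [hchar, e4, e5, e6]
    have hkey2 : ‖p - zs‖ ≤ ‖u‖ := by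
      rcases eq_or_lt_of_le (norm_nonneg (p - zs)) with h0 | h0
      · rw [← h0]; exact norm_nonneg u
      · nlinarith only [hkey1, h0]
    set A := (z t - zs) - α • (saddleOp f (z t) - saddleOp f zs) with hA
    have hsplit : u = A + (-α) • (gt (z t) - saddleOp f (z t)) := by rw [hu, hA]; module
    have hB : ‖(-α) • (gt (z t) - saddleOp f (z t))‖ ≤ α * δ := by
      rw [norm_smul, Real.norm_eq_abs, abs_neg, abs_of_pos hα0]
      exact mul_le_mul_of_nonneg_left (hgt _ hztS) hα0.le
    have hnu : ‖u‖ ≤ ‖A‖ + α * δ := by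
      calc ‖u‖ = ‖A + (-α) • (gt (z t) - saddleOp f (z t))‖ := by rw [hsplit]
        _ ≤ ‖A‖ + ‖(-α) • (gt (z t) - saddleOp f (z t))‖ := norm_add_le _ _
        _ ≤ ‖A‖ + α * δ := by linarith [hB]
    have hmono := MONO (z t) hztS zs hzsS
    have hlipt := hlip (z t) hztS zs hzsS
    have hA2 : ‖A‖^2 ≤ q * ‖z t - zs‖^2 := by
      have e : ‖A‖^2 = ‖z t - zs‖^2
          - 2*(α*⟪saddleOp f (z t) - saddleOp f zs, z t - zs⟫)
          + α^2 * ‖saddleOp f (z t) - saddleOp f zs‖^2 := by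
        rw [hA, norm_sub_sq_real, real_inner_smul_right, norm_smul, Real.norm_eq_abs,
          mul_pow, sq_abs, real_inner_comm (z t - zs) (saddleOp f (z t) - saddleOp f zs)]
      have hG2 : ‖saddleOp f (z t) - saddleOp f zs‖^2 ≤ ℓ^2 * ‖z t - zs‖^2 := by
        have h := pow_le_pow_left₀ (norm_nonneg _) hlipt 2
        rw [mul_pow] at h
        exact h
      have m1 : 2*α*(μ*‖z t - zs‖^2)
          ≤ 2*α*⟪saddleOp f (z t) - saddleOp f zs, z t - zs⟫ :=
        mul_le_mul_of_nonneg_left hmono (by positivity)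
      have m2 : α^2*‖saddleOp f (z t) - saddleOp f zs‖^2
          ≤ α^2*(ℓ^2*‖z t - zs‖^2) :=
        mul_le_mul_of_nonneg_left hG2 (by positivity)
      have h2am : 2*α*μ*‖z t - zs‖^2 = s/2*‖z t - zs‖^2 := by
        rw [hα, hs]; field_simp; ring
      have ha2l : α^2*(ℓ^2*‖z t - zs‖^2) = s/16*‖z t - zs‖^2 := by
        rw [hα, hs]; field_simp; ring
      rw [hq]
      linarith only [e, m1, m2, h2am, ha2l]
    have hfin1 : ‖p - zs‖^2 ≤ (‖A‖ + α*δ)^2 := by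
      have h1 : ‖p - zs‖ ≤ ‖A‖ + α*δ := le_trans hkey2 hnu
      nlinarith only [h1, norm_nonneg (p - zs)]
    have hyoung : (‖A‖ + α*δ)^2 ≤ (1 + s/8)*‖A‖^2 + (1 + 8/s)*(α*δ)^2 := by
      have := young_sq (M := ‖A‖) (c := α*δ) (β := s/8) (by positivity)
      have h8 : 1/(s/8) = 8/s := by rw [one_div_div]
      rw [h8] at this
      exact this
    have hlast : (1 + s/8)*‖A‖^2 ≤ r * ‖z t - zs‖^2 := by
      have := mul_le_mul_of_nonneg_left hA2 (by positivity : (0:ℝ) ≤ 1 + s/8)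
      rw [hr]; linarith [this]
    rw [hCst]
    linarith only [hfin1, hyoung, hlast]
  -- main induction
  have main : ∀ t, t ≤ T → ‖z t - zs‖^2 ≤ r^t * ‖z 0 - zs‖^2 + Cst/(1-r) := by
    intro t
    induction t with
    | zero =>
      intro _
      have : 0 ≤ Cst/(1-r) := div_nonneg hC0 h1r.le
      simp only [pow_zero, one_mul]
      linarith
    | succ n ih =>
      intro h
      have hn : n < T := Nat.lt_of_succ_le h
      have ihn := ih hn.le
      have hst := step n hn
      have hmul : r * ‖z n - zs‖^2 ≤ r * (r^n * ‖z 0 - zs‖^2 + Cst/(1-r)) :=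
        mul_le_mul_of_nonneg_left ihn hr0.le
      have h1r' : (1:ℝ) - r ≠ 0 := ne_of_gt h1r
      have hfield : r * (Cst/(1-r)) + Cst = Cst/(1-r) := by
        field_simp
        ring
      calc ‖z (n+1) - zs‖^2 ≤ r * ‖z n - zs‖^2 + Cst := hst
        _ ≤ r * (r^n * ‖z 0 - zs‖^2 + Cst/(1-r)) + Cst := by linarith
        _ = r^(n+1) * ‖z 0 - zs‖^2 + (r * (Cst/(1-r)) + Cst) := by ring
        _ = r^(n+1) * ‖z 0 - zs‖^2 + Cst/(1-r) := by rw [hfield]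
  have hmain := main T le_rfl
  -- bound r^T by the exponential
  have hexp1 : r ≤ Real.exp (-(s/8)) := by
    have h1 := Real.add_one_le_exp (-(s/8))
    rw [hr, hq]
    linarith only [h1, hs0, sq_nonneg s]
  have hexp2 : r^T ≤ Real.exp (-(s/8))^T := pow_le_pow_left₀ hr0.le hexp1 T
  have hexp3 : Real.exp (-(s/8))^T = Real.exp (-(T:ℝ)/(8*κ^2)) := by
    rw [← Real.exp_nat_mul]
    congr 1
    have hμ' : μ ≠ 0 := ne_of_gt hμ
    have hℓ' : ℓ ≠ 0 := ne_of_gt hℓ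
    rw [hκ, hs, div_pow]
    rw [eq_div_iff (by positivity : (8:ℝ)*(ℓ^2/μ^2) ≠ 0)]
    field_simp
  -- bound the constant term
  have hCbound : Cst/(1-r) ≤ (1/ℓ^2 + 2/μ^2)*δ^2 := by
    have hCeq : Cst = (s+8)*s/(16*μ^2)*δ^2 := by
      rw [hCst, hα, hs]; field_simp; ring
    have htar : (1/ℓ^2 + 2/μ^2)*δ^2*(5*s/16) = (s+2)*(5*s/16)/μ^2*δ^2 := by
      rw [hs]; field_simp
    rw [div_le_iff₀ h1r]
    have hR0 : (0:ℝ) ≤ (1/ℓ^2 + 2/μ^2)*δ^2 := by positivity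
    have step1 : (1/ℓ^2 + 2/μ^2)*δ^2*(5*s/16) ≤ (1/ℓ^2 + 2/μ^2)*δ^2*(1-r) :=
      mul_le_mul_of_nonneg_left hr1 hR0
    refine le_trans ?_ step1
    rw [hCeq, htar]
    have hfrac : (s+8)*s/(16*μ^2) ≤ (s+2)*(5*s/16)/μ^2 := by
      rw [div_le_div_iff₀ (by positivity) (by positivity)]
      nlinarith only [hs0, mul_pos (mul_pos hs0 hs0) (mul_pos hμ hμ),
        mul_pos hs0 (mul_pos hμ hμ)]
    exact mul_le_mul_of_nonneg_right hfrac (sq_nonneg δ)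
  calc ‖z T - zs‖^2 ≤ r^T * ‖z 0 - zs‖^2 + Cst/(1-r) := hmain
    _ ≤ Real.exp (-(T:ℝ)/(8*κ^2)) * ‖z 0 - zs‖^2 + (1/ℓ^2 + 2/μ^2)*δ^2 := by
        have h2 : r^T * ‖z 0 - zs‖^2 ≤ Real.exp (-(T:ℝ)/(8*κ^2)) * ‖z 0 - zs‖^2 := by
          rw [← hexp3]
          exact mul_le_mul_of_nonneg_right hexp2 (sq_nonneg _)
        linarith only [hCbound, h2]
end
end

section
/- Let E and E' be real Hilbert spaces, X ⊆ E and Y ⊆ E' nonempty closed convex sets, and f : E × E' → ℝ a function that is μ-strongly-convex–strongly-concave on X × Y and whose saddle operator G(x,y) = (∇_x f(x,y), −∇_y f(x,y)) is ℓ-Lipschitz on X × Y, with 0 < μ ≤ ℓ. Let z* ∈ X × Y be a saddle point of f on X × Y, and set κ = ℓ/μ. Let δ ≥ 0 and let g̃ : E × E' → E × E' satisfy ‖g̃(z) − G(z)‖ ≤ δ for all z ∈ X × Y. Fix z₀ ∈ X × Y, set α = 1/(2ℓ), and define the Inexact-EG iterates z_{t+1/2} = Π_{X×Y}(z_t − α·g̃(z_t)),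 z_{t+1} = Π_{X×Y}(z_t − α·g̃(z_{t+1/2})) for t = 0, …, T−1. Then ‖z_T − z*‖² ≤ exp(−T/(8κ))·‖z₀ − z*‖² + (8δ²/μ)·(2/ℓ + 1/μ). -/
open RealInnerProductSpace

noncomputable section

variable {E E' : Type*} [NormedAddCommGroup E] [InnerProductSpace ℝ E] [CompleteSpace E]
  [NormedAddCommGroup E'] [InnerProductSpace ℝ E'] [CompleteSpace E']

set_option linter.unusedSectionVars false
open InnerProductSpace Set Filter
set_option linter.unusedSectionVars false

section Helpers
variable {H : Type*} [NormedAddCommGroup H] [InnerProductSpace ℝ H] [CompleteSpace H]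

lemma slope_deriv_le' {φ : ℝ → ℝ} {d c : ℝ} (hφ : HasDerivAt φ d 0)
    (hb : ∀ t ∈ Set.Ioc (0:ℝ) 1, φ t - φ 0 ≤ t * c) : d ≤ c := by
  have h1 : Tendsto (slope φ 0) (nhdsWithin 0 (Set.Ioi 0)) (nhds d) :=
    (hasDerivAt_iff_tendsto_slope.1 hφ).mono_left
      (nhdsWithin_mono _ (fun t ht => Set.mem_compl_singleton_iff.2 (ne_of_gt ht)))
  refine le_of_tendsto h1 ?_
  filter_upwards [Ioc_mem_nhdsGT_of_mem (Set.left_mem_Ico.2 one_pos)] with t ht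
  rw [slope_def_field, sub_zero, div_le_iff₀ ht.1]
  exact (hb t ht).trans_eq (by ring)

lemma slope_le_deriv' {φ : ℝ → ℝ} {d c : ℝ} (hφ : HasDerivAt φ d 0)
    (hb : ∀ t ∈ Set.Ioc (0:ℝ) 1, t * c ≤ φ t - φ 0) : c ≤ d := by
  have := slope_deriv_le' (φ := fun t => -φ t) (c := -c) hφ.neg (fun t ht => by
    have := hb t ht; linarith)
  linarith

lemma hasGradientAt_line' {g : H → ℝ} {g' x : H} (h : HasGradientAt g g' x) (v : H) :
    HasDerivAt (fun t : ℝ => g (x + t • v)) ⟪g', v⟫ 0 := by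
  have hl : HasDerivAt (fun t : ℝ => x + t • v) v 0 := by
    simpa using ((hasDerivAt_id (0:ℝ)).smul_const v).const_add x
  have hf : HasFDerivAt g (toDual ℝ H g') (x + (0:ℝ) • v) := by simpa using h.hasFDerivAt
  have := hf.comp_hasDerivAt (0:ℝ) hl
  simpa [toDual_apply_apply, Function.comp_def] using this

lemma seg_mem' {C : Set H} (hC : Convex ℝ C) {x u : H} (hx : x ∈ C) (hu : u ∈ C)
    {t : ℝ} (ht : t ∈ Set.Ioc (0:ℝ) 1) : x + t • (u - x) ∈ C := by
  have := hC hx hu (by linarith [ht.2] : (0:ℝ) ≤ 1 - t) ht.1.le (by ring)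
  convert this using 1
  rw [sub_smul, one_smul, smul_sub]; abel

lemma first_order_of_convexOn' {C : Set H} {g : H → ℝ} {g' x u : H}
    (hc : ConvexOn ℝ C g) (hx : x ∈ C) (hu : u ∈ C) (hg : HasGradientAt g g' x) :
    g x + ⟪g', u - x⟫ ≤ g u := by
  have hd := hasGradientAt_line' hg (u - x)
  have hb : ∀ t ∈ Set.Ioc (0:ℝ) 1,
      g (x + t • (u - x)) - g (x + (0:ℝ) • (u - x)) ≤ t * (g u - g x) := by
    intro t ht
    have h2 := hc.2 hx hu (by linarith [ht.2] : (0:ℝ) ≤ 1 - t) ht.1.le (by ring)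
    have he : (1 - t) • x + t • u = x + t • (u - x) := by
      rw [sub_smul, one_smul, smul_sub]; abel
    rw [he] at h2
    simp only [zero_smul, add_zero, smul_eq_mul] at *
    linarith
  have := slope_deriv_le' hd (by simpa using hb)
  linarith

lemma inner_nonneg_of_min' {C : Set H} (hC : Convex ℝ C) {g : H → ℝ} {g' x u : H}
    (hx : x ∈ C) (hu : u ∈ C) (hmin : ∀ p ∈ C, g x ≤ g p) (hg : HasGradientAt g g' x) :
    0 ≤ ⟪g', u - x⟫ := by
  have hd := hasGradientAt_line' hg (u - x)
  refine slope_le_deriv' hd (fun t ht => ?_)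
  have := hmin _ (seg_mem' hC hx hu ht)
  simp only [zero_smul, add_zero] at *
  linarith [this]

lemma hasGradientAt_quad' (μ : ℝ) (x : H) :
    HasGradientAt (fun x : H => μ / 2 * ‖x‖ ^ 2) (μ • x) x := by
  have h2 := ((hasStrictFDerivAt_norm_sq x).hasFDerivAt).const_mul (μ / 2)
  have he : (μ / 2) • (2 • (innerSL ℝ x)) = toDual ℝ H (μ • x) := by
    ext y
    simp [toDual_apply_apply, real_inner_smul_left]
    ring
  rw [he] at h2
  simpa using h2.hasGradientAt

lemma HasGradientAt.subQuad {g : H → ℝ} {g' x : H} (hg : HasGradientAt g g' x) (μ : ℝ) :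
    HasGradientAt (fun x => g x - μ / 2 * ‖x‖ ^ 2) (g' - μ • x) x := by
  have := hg.hasFDerivAt.sub (hasGradientAt_quad' μ x).hasFDerivAt
  rw [← map_sub] at this
  simpa [Pi.sub_def] using this.hasGradientAt

lemma neg_hasGradientAt' {g : H → ℝ} {g' x : H} (hg : HasGradientAt g g' x) :
    HasGradientAt (fun v => -g v) (-g') x := by
  have := hg.hasFDerivAt.neg
  rw [← map_neg] at this
  simpa [Pi.neg_def] using this.hasGradientAt

lemma strong_first_order' {C : Set H} {g : H → ℝ} {μ : ℝ} {g' x u : H}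
    (hc : ConvexOn ℝ C (fun x => g x - μ / 2 * ‖x‖ ^ 2)) (hx : x ∈ C) (hu : u ∈ C)
    (hg : HasGradientAt g g' x) :
    g x + ⟪g', u - x⟫ + μ / 2 * ‖u - x‖ ^ 2 ≤ g u := by
  have h := first_order_of_convexOn' hc hx hu (hg.subQuad μ)
  have e1 : ⟪g' - μ • x, u - x⟫ = ⟪g', u - x⟫ - μ * ⟪x, u - x⟫ := by
    rw [inner_sub_left, real_inner_smul_left]
  have e2 : ⟪x, u - x⟫ = ⟪u, x⟫ - ‖x‖ ^ 2 := by
    rw [inner_sub_right, real_inner_self_eq_norm_sq, real_inner_comm]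
  have e3 : ‖u - x‖ ^ 2 = ‖u‖ ^ 2 - 2 * ⟪u, x⟫ + ‖x‖ ^ 2 := norm_sub_sq_real u x
  rw [e1, e2] at h
  rw [e3]
  nlinarith [h]

lemma proj_inner_le' {S : Set H} (hS : Convex ℝ S) {v p : H} (hmem : p ∈ S)
    (hmin : ∀ q ∈ S, ‖v - p‖ ≤ ‖v - q‖) {u : H} (hu : u ∈ S) : ⟪v - p, u - p⟫ ≤ 0 := by
  set I := ⟪v - p, u - p⟫ with hIdef
  set c := ‖u - p‖ ^ 2 with hcdef
  have key : ∀ t ∈ Set.Ioc (0:ℝ) 1, 2 * t * I ≤ t ^ 2 * c := by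
    intro t ht
    have hq : p + t • (u - p) ∈ S := seg_mem' hS hmem hu ht
    have h1 : ‖v - p‖ ^ 2 ≤ ‖v - (p + t • (u - p))‖ ^ 2 :=
      pow_le_pow_left₀ (norm_nonneg _) (hmin _ hq) 2
    have h2 : ‖v - (p + t • (u - p))‖ ^ 2 = ‖v - p‖ ^ 2 - 2 * (t * I) + t ^ 2 * c := by
      have he : v - (p + t • (u - p)) = (v - p) - t • (u - p) := by abel
      rw [he, norm_sub_sq_real, real_inner_smul_right, norm_smul, Real.norm_eq_abs,
        mul_pow, sq_abs, hIdef, hcdef]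
    rw [h2] at h1
    linarith
  have hc : 0 ≤ c := sq_nonneg _
  by_contra hI
  push_neg at hI
  rcases eq_or_lt_of_le hc with hc0 | hcpos
  · have := key 1 ⟨one_pos, le_refl 1⟩
    rw [← hc0] at this; linarith
  · have ht : min 1 (I / c) ∈ Set.Ioc (0:ℝ) 1 :=
      ⟨lt_min one_pos (div_pos hI hcpos), min_le_left _ _⟩
    have hk := key _ ht
    have h3 : min 1 (I / c) * c ≤ I := by
      have := mul_le_mul_of_nonneg_right (min_le_right 1 (I / c)) hcpos.le
      calc min 1 (I / c) * c ≤ I / c * c := this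
        _ = I := by field_simp
    nlinarith [ht.1]

end Helpers

lemma prodSet_convex {X : Set E} {Y : Set E'} (hX : Convex ℝ X) (hY : Convex ℝ Y) :
    Convex ℝ (prodSet X Y) := by
  intro p hp q hq a b ha hb hab
  exact ⟨hX hp.1 hq.1 ha hb hab, hY hp.2 hq.2 ha hb hab⟩

lemma saddleOp_strongMono {X : Set E} {Y : Set E'} {f : E × E' → ℝ} {μ : ℝ}
    (hdx : ∀ x ∈ X, ∀ y ∈ Y, DifferentiableAt ℝ (fun u => f (u, y)) x)
    (hdy : ∀ x ∈ X, ∀ y ∈ Y, DifferentiableAt ℝ (fun v => f (x, v)) y)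
    (hscx : ∀ y ∈ Y, ConvexOn ℝ X (fun x => f (x, y) - μ / 2 * ‖x‖ ^ 2))
    (hscy : ∀ x ∈ X, ConvexOn ℝ Y (fun y => -f (x, y) - μ / 2 * ‖y‖ ^ 2))
    {z₁ z₂ : WithLp 2 (E × E')} (h₁ : z₁ ∈ prodSet X Y) (h₂ : z₂ ∈ prodSet X Y) :
    μ * ‖z₁ - z₂‖ ^ 2 ≤ ⟪saddleOp f z₁ - saddleOp f z₂, z₁ - z₂⟫ := by
  obtain ⟨hx₁, hy₁⟩ := h₁
  obtain ⟨hx₂, hy₂⟩ := h₂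
  set x₁ := (WithLp.equiv 2 (E × E') z₁).1 with hx₁d
  set y₁ := (WithLp.equiv 2 (E × E') z₁).2 with hy₁d
  set x₂ := (WithLp.equiv 2 (E × E') z₂).1 with hx₂d
  set y₂ := (WithLp.equiv 2 (E × E') z₂).2 with hy₂d
  set gx₁ := gradient (fun u => f (u, y₁)) x₁ with hgx₁
  set gx₂ := gradient (fun u => f (u, y₂)) x₂ with hgx₂
  set gy₁ := gradient (fun v => f (x₁, v)) y₁ with hgy₁
  set gy₂ := gradient (fun v => f (x₂, v)) y₂ with hgy₂
  have hinner : ⟪saddleOp f z₁ - saddleOp f z₂, z₁ - z₂⟫ =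
      ⟪gx₁ - gx₂, x₁ - x₂⟫ + ⟪(-gy₁) - (-gy₂), y₁ - y₂⟫ := rfl
  have hnorm : ‖z₁ - z₂‖ ^ 2 = ‖x₁ - x₂‖ ^ 2 + ‖y₁ - y₂‖ ^ 2 := by
    rw [WithLp.prod_norm_sq_eq_of_L2]; rfl
  have A := strong_first_order' (hscx y₁ hy₁) hx₁ hx₂ ((hdx x₁ hx₁ y₁ hy₁).hasGradientAt)
  have B := strong_first_order' (hscx y₂ hy₂) hx₂ hx₁ ((hdx x₂ hx₂ y₂ hy₂).hasGradientAt)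
  have C := strong_first_order' (g := fun v => -f (x₁, v)) (hscy x₁ hx₁) hy₁ hy₂
    (neg_hasGradientAt' ((hdy x₁ hx₁ y₁ hy₁).hasGradientAt))
  have D := strong_first_order' (g := fun v => -f (x₂, v)) (hscy x₂ hx₂) hy₂ hy₁
    (neg_hasGradientAt' ((hdy x₂ hx₂ y₂ hy₂).hasGradientAt))
  have r1 : ⟪gx₁, x₂ - x₁⟫ = -⟪gx₁, x₁ - x₂⟫ := by rw [← inner_neg_right, neg_sub]
  have r2 : ⟪-gy₁, y₂ - y₁⟫ = -⟪-gy₁, y₁ - y₂⟫ := by rw [← inner_neg_right, neg_sub]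
  have r3 : ⟪gx₂, x₁ - x₂⟫ = -⟪-(gx₂ : E), x₁ - x₂⟫ := by rw [inner_neg_left]; ring
  have n1 : ‖x₂ - x₁‖ = ‖x₁ - x₂‖ := norm_sub_rev _ _
  have n2 : ‖y₂ - y₁‖ = ‖y₁ - y₂‖ := norm_sub_rev _ _
  have s1 : ⟪gx₁ - gx₂, x₁ - x₂⟫ = ⟪gx₁, x₁ - x₂⟫ - ⟪gx₂, x₁ - x₂⟫ := by
    rw [inner_sub_left]
  have s2 : ⟪(-gy₁) - (-gy₂), y₁ - y₂⟫ = ⟪-gy₁, y₁ - y₂⟫ - ⟪-gy₂, y₁ - y₂⟫ := by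
    rw [inner_sub_left]
  rw [hinner, hnorm, s1, s2]
  rw [r1, n1] at A
  rw [r2, n2] at C
  linarith

lemma saddle_vi {X : Set E} {Y : Set E'} {f : E × E' → ℝ}
    (hXcv : Convex ℝ X) (hYcv : Convex ℝ Y)
    (hdx : ∀ x ∈ X, ∀ y ∈ Y, DifferentiableAt ℝ (fun u => f (u, y)) x)
    (hdy : ∀ x ∈ X, ∀ y ∈ Y, DifferentiableAt ℝ (fun v => f (x, v)) y)
    {zs : WithLp 2 (E × E')} (hzsS : zs ∈ prodSet X Y)
    (hsaddle : ∀ x ∈ X, ∀ y ∈ Y,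
      f ((WithLp.equiv 2 (E × E') zs).1, y) ≤ f (WithLp.equiv 2 (E × E') zs) ∧
      f (WithLp.equiv 2 (E × E') zs) ≤ f (x, (WithLp.equiv 2 (E × E') zs).2))
    {u : WithLp 2 (E × E')} (hu : u ∈ prodSet X Y) :
    0 ≤ ⟪saddleOp f zs, u - zs⟫ := by
  obtain ⟨hxs, hys⟩ := hzsS
  obtain ⟨hx, hy⟩ := hu
  set xs := (WithLp.equiv 2 (E × E') zs).1 with hxsd
  set ys := (WithLp.equiv 2 (E × E') zs).2 with hysd
  have he : f (xs, ys) = f (WithLp.equiv 2 (E × E') zs) := by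
    rw [hxsd, hysd]
  have h1 : 0 ≤ ⟪gradient (fun u => f (u, ys)) xs, (WithLp.equiv 2 (E × E') u).1 - xs⟫ := by
    refine inner_nonneg_of_min' hXcv hxs hx (fun p hp => ?_)
      ((hdx xs hxs ys hys).hasGradientAt)
    rw [he]
    exact (hsaddle p hp ys hys).2
  have h2 : 0 ≤ ⟪-gradient (fun v => f (xs, v)) ys, (WithLp.equiv 2 (E × E') u).2 - ys⟫ := by
    refine inner_nonneg_of_min' (g := fun v => -f (xs, v)) hYcv hys hy (fun q hq => ?_)
      (neg_hasGradientAt' ((hdy xs hxs ys hys).hasGradientAt))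
    show -f (xs, ys) ≤ -f (xs, q)
    rw [he]
    exact neg_le_neg (hsaddle xs hxs q hq).1
  have hsplit : ⟪saddleOp f zs, u - zs⟫ =
      ⟪gradient (fun u => f (u, ys)) xs, (WithLp.equiv 2 (E × E') u).1 - xs⟫ +
      ⟪-gradient (fun v => f (xs, v)) ys, (WithLp.equiv 2 (E × E') u).2 - ys⟫ := rfl
  linarith

lemma two_mul_le_sq_add_sq (x y : ℝ) : 2 * (x * y) ≤ x ^ 2 + y ^ 2 := by
  nlinarith [sq_nonneg (x - y)]

lemma sq_le_two_sq_add_two_sq {x y z : ℝ} (hx : 0 ≤ x) (h : x ≤ y + z) :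
    x ^ 2 ≤ 2 * y ^ 2 + 2 * z ^ 2 := by
  have h1 : x ^ 2 ≤ (y + z) ^ 2 := by nlinarith
  nlinarith [sq_nonneg (y - z)]

lemma add_sq_le_two (p q : ℝ) : (p + q) ^ 2 ≤ 2 * p ^ 2 + 2 * q ^ 2 := by
  nlinarith [sq_nonneg (p - q)]

lemma rec_bound {u : ℕ → ℝ} {r c D : ℝ} (hr0 : 0 ≤ r) (hD : c ≤ (1 - r) * D) (hD0 : 0 ≤ D)
    (T : ℕ) (hstep : ∀ t < T, u (t + 1) ≤ r * u t + c) : ∀ t ≤ T, u t ≤ r ^ t * u 0 + D := by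
  intro t
  induction t with
  | zero => intro _; simpa using (by linarith : u 0 ≤ u 0 + D)
  | succ n ih =>
    intro h
    have h1 := hstep n (by omega)
    have h2 := ih (by omega)
    have h3 := mul_le_mul_of_nonneg_left h2 hr0
    calc u (n + 1) ≤ r * u n + c := h1
      _ ≤ r * (r ^ n * u 0 + D) + c := by linarith
      _ = r ^ (n + 1) * u 0 + (r * D + c) := by ring
      _ ≤ r ^ (n + 1) * u 0 + D := by linarith [hD]

set_option maxHeartbeats 1600000 in
/-- Lemma 4.4 / C.2: Inexact-EG for strongly-convex–strongly-concave
problems.  With `κ = ℓ/μ`, stepsize `α = 1/(2ℓ)` and a `δ`-inexact gradient oracle `g̃`, the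
Extragradient iterates `z_{t+1/2} = Π_{X×Y}(z_t − α g̃(z_t))`,
`z_{t+1} = Π_{X×Y}(z_t − α g̃(z_{t+1/2}))` satisfy
`‖z_T − z*‖² ≤ exp(−T/(8κ))·‖z₀ − z*‖² + (8δ²/μ)·(2/ℓ + 1/μ)`. -/
theorem inexact_eg_scsc_convergence
    (X : Set E) (Y : Set E') (hXne : X.Nonempty) (hYne : Y.Nonempty)
    (hXcl : IsClosed X) (hYcl : IsClosed Y) (hXcv : Convex ℝ X) (hYcv : Convex ℝ Y)
    (f : E × E' → ℝ) (μ ℓ : ℝ) (hμ : 0 < μ) (hμℓ : μ ≤ ℓ)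
    (hdx : ∀ x ∈ X, ∀ y ∈ Y, DifferentiableAt ℝ (fun u => f (u, y)) x)
    (hdy : ∀ x ∈ X, ∀ y ∈ Y, DifferentiableAt ℝ (fun v => f (x, v)) y)
    (hscx : ∀ y ∈ Y, ConvexOn ℝ X (fun x => f (x, y) - μ / 2 * ‖x‖ ^ 2))
    (hscy : ∀ x ∈ X, ConvexOn ℝ Y (fun y => -f (x, y) - μ / 2 * ‖y‖ ^ 2))
    (hlip : ∀ z₁ ∈ prodSet X Y, ∀ z₂ ∈ prodSet X Y,
      ‖saddleOp f z₁ - saddleOp f z₂‖ ≤ ℓ * ‖z₁ - z₂‖)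
    (zs : WithLp 2 (E × E')) (hzsS : zs ∈ prodSet X Y)
    (hsaddle : ∀ x ∈ X, ∀ y ∈ Y,
      f ((WithLp.equiv 2 (E × E') zs).1, y) ≤ f (WithLp.equiv 2 (E × E') zs) ∧
      f (WithLp.equiv 2 (E × E') zs) ≤ f (x, (WithLp.equiv 2 (E × E') zs).2))
    (κ : ℝ) (hκ : κ = ℓ / μ)
    (δ : ℝ) (hδ : 0 ≤ δ)
    (gt : WithLp 2 (E × E') → WithLp 2 (E × E'))
    (hgt : ∀ z ∈ prodSet X Y, ‖gt z - saddleOp f z‖ ≤ δ)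
    (α : ℝ) (hα : α = 1 / (2 * ℓ))
    (T : ℕ) (z w : ℕ → WithLp 2 (E × E')) (hz0 : z 0 ∈ prodSet X Y)
    (hhalf : ∀ t < T, IsProjOn (prodSet X Y) (z t - α • gt (z t)) (w t))
    (hfull : ∀ t < T, IsProjOn (prodSet X Y) (z t - α • gt (w t)) (z (t + 1))) :
    ‖z T - zs‖ ^ 2 ≤
      Real.exp (-(T : ℝ) / (8 * κ)) * ‖z 0 - zs‖ ^ 2 +
        8 * δ ^ 2 / μ * (2 / ℓ + 1 / μ) := by
  have hℓ : (0:ℝ) < ℓ := lt_of_lt_of_le hμ hμℓ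
  have hα0 : (0:ℝ) < α := by rw [hα]; positivity
  have hαℓ : α * ℓ = 1 / 2 := by rw [hα]; field_simp
  have hαμ : α * μ ≤ 1 / 2 := by
    have h0 := mul_le_mul_of_nonneg_left hμℓ hα0.le
    linarith [hαℓ]
  have hS : Convex ℝ (prodSet X Y) := prodSet_convex hXcv hYcv
  have hmem : ∀ t, t ≤ T → z t ∈ prodSet X Y := by
    intro t
    induction t with
    | zero => intro _; exact hz0
    | succ n ih => intro h; exact (hfull n (by omega)).1
  have step : ∀ t < T, ‖z (t + 1) - zs‖ ^ 2 ≤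
      (1 - μ * α / 2) * ‖z t - zs‖ ^ 2 + δ ^ 2 * (8 * α ^ 2 + α / μ) := by
    intro t ht
    set a := z t with had
    set b := w t with hbd
    set c := z (t + 1) with hcd
    have ha : a ∈ prodSet X Y := hmem t ht.le
    have hb : b ∈ prodSet X Y := (hhalf t ht).1
    have hc : c ∈ prodSet X Y := (hfull t ht).1
    have P1 := proj_inner_le' hS (hhalf t ht).1 (hhalf t ht).2 hc
    have P2 := proj_inner_le' hS (hfull t ht).1 (hfull t ht).2 hzsS
    have P1' : ⟪a - b, c - b⟫ ≤ α * ⟪gt a, c - b⟫ := by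
      have he : a - α • gt a - b = (a - b) - α • gt a := by abel
      rw [he, inner_sub_left, real_inner_smul_left] at P1
      linarith
    have P2' : ⟪a - c, zs - c⟫ ≤ α * ⟪gt b, zs - c⟫ := by
      have he : a - α • gt b - c = (a - c) - α • gt b := by abel
      rw [he, inner_sub_left, real_inner_smul_left] at P2
      linarith
    have hmono := saddleOp_strongMono hdx hdy hscx hscy hb hzsS
    have hvi := saddle_vi hXcv hYcv hdx hdy hzsS hsaddle hb
    have hGb : μ * ‖b - zs‖ ^ 2 ≤ ⟪saddleOp f b, b - zs⟫ := by
      rw [inner_sub_left] at hmono; linarith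
    have e2 : ‖gt b - saddleOp f b‖ ≤ δ := hgt b hb
    have ediff : ‖gt b - gt a‖ ≤ ℓ * ‖b - a‖ + 2 * δ := by
      have hsplit : gt b - gt a = (gt b - saddleOp f b) + (saddleOp f b - saddleOp f a)
          + (saddleOp f a - gt a) := by abel
      have h3 : ‖saddleOp f a - gt a‖ = ‖gt a - saddleOp f a‖ := norm_sub_rev _ _
      calc ‖gt b - gt a‖
          ≤ ‖(gt b - saddleOp f b) + (saddleOp f b - saddleOp f a)‖ + ‖saddleOp f a - gt a‖ := by
            rw [hsplit]; exact norm_add_le _ _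
        _ ≤ ‖gt b - saddleOp f b‖ + ‖saddleOp f b - saddleOp f a‖ + ‖saddleOp f a - gt a‖ := by
            linarith [norm_add_le (gt b - saddleOp f b) (saddleOp f b - saddleOp f a)]
        _ ≤ δ + ℓ * ‖b - a‖ + δ := by
            rw [h3]; linarith [hgt a ha, hlip b hb a ha]
        _ = ℓ * ‖b - a‖ + 2 * δ := by ring
    have id1 : 2 * ⟪a - c, zs - c⟫ = ‖a - c‖ ^ 2 + ‖zs - c‖ ^ 2 - ‖a - zs‖ ^ 2 := by
      have h := norm_sub_sq_real (a - c) (zs - c)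
      have he : (a - c) - (zs - c) = a - zs := by abel
      rw [he] at h; linarith
    have id2 : 2 * ⟪a - b, c - b⟫ = ‖a - b‖ ^ 2 + ‖c - b‖ ^ 2 - ‖a - c‖ ^ 2 := by
      have h := norm_sub_sq_real (a - b) (c - b)
      have he : (a - b) - (c - b) = a - c := by abel
      rw [he] at h; linarith
    have dec1 : ⟪gt b, zs - c⟫ = ⟪gt b, zs - b⟫ + ⟪gt b, b - c⟫ := by
      rw [← inner_add_right]; congr 1; abel
    have dec2 : ⟪gt b, b - c⟫ = ⟪gt a, b - c⟫ + ⟪gt b - gt a, b - c⟫ := by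
      rw [inner_sub_left]; ring
    have dec3 : ⟪gt b, zs - b⟫ = -⟪saddleOp f b, b - zs⟫ + ⟪gt b - saddleOp f b, zs - b⟫ := by
      rw [inner_sub_left]
      have hflip : ⟪saddleOp f b, zs - b⟫ = -⟪saddleOp f b, b - zs⟫ := by
        rw [← inner_neg_right, neg_sub]
      rw [hflip]; ring
    have hg1 : ⟪gt a, b - c⟫ = -⟪gt a, c - b⟫ := by rw [← inner_neg_right, neg_sub]
    have cs1 : ⟪gt b - saddleOp f b, zs - b⟫ ≤ δ * ‖zs - b‖ :=
      (real_inner_le_norm _ _).trans (mul_le_mul_of_nonneg_right e2 (norm_nonneg _))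
    have cs2 : ⟪gt b - gt a, b - c⟫ ≤ (ℓ * ‖b - a‖ + 2 * δ) * ‖b - c‖ :=
      (real_inner_le_norm _ _).trans (mul_le_mul_of_nonneg_right ediff (norm_nonneg _))
    have nrev1 : ‖b - zs‖ = ‖zs - b‖ := norm_sub_rev _ _
    have nrev2 : ‖c - b‖ = ‖b - c‖ := norm_sub_rev _ _
    have nrev3 : ‖b - a‖ = ‖a - b‖ := norm_sub_rev _ _
    have nrev4 : ‖c - zs‖ = ‖zs - c‖ := norm_sub_rev _ _
    have h1 : ⟪gt b, zs - b⟫ ≤ -(μ * ‖zs - b‖ ^ 2) + δ * ‖zs - b‖ := by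
      rw [dec3]
      rw [nrev1] at hGb
      linarith
    have h1' : 2 * α * ⟪gt b, zs - b⟫ ≤ 2 * α * (-(μ * ‖zs - b‖ ^ 2) + δ * ‖zs - b‖) :=
      mul_le_mul_of_nonneg_left h1 (by positivity)
    have am1 : 2 * (δ * ‖zs - b‖) ≤ μ * ‖zs - b‖ ^ 2 + δ ^ 2 / μ := by
      have key : 0 ≤ (μ * ‖zs - b‖ - δ) ^ 2 / μ := by positivity
      have hexp : (μ * ‖zs - b‖ - δ) ^ 2 / μ
          = μ * ‖zs - b‖ ^ 2 - 2 * (δ * ‖zs - b‖) + δ ^ 2 / μ := by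
        field_simp; ring
      linarith [hexp ▸ key]
    have am1' := mul_le_mul_of_nonneg_left am1 hα0.le
    have bnd1 : 2 * α * ⟪gt b, zs - b⟫ ≤ -(α * μ * ‖zs - b‖ ^ 2) + α * (δ ^ 2 / μ) := by
      linarith [h1', am1']
    have am2 : 2 * α * ((ℓ * ‖b - a‖ + 2 * δ) * ‖b - c‖)
        ≤ α ^ 2 * (ℓ * ‖b - a‖ + 2 * δ) ^ 2 + ‖b - c‖ ^ 2 := by
      have h10 := two_mul_le_sq_add_sq (α * (ℓ * ‖b - a‖ + 2 * δ)) ‖b - c‖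
      calc 2 * α * ((ℓ * ‖b - a‖ + 2 * δ) * ‖b - c‖)
          = 2 * ((α * (ℓ * ‖b - a‖ + 2 * δ)) * ‖b - c‖) := by ring
        _ ≤ (α * (ℓ * ‖b - a‖ + 2 * δ)) ^ 2 + ‖b - c‖ ^ 2 := h10
        _ = α ^ 2 * (ℓ * ‖b - a‖ + 2 * δ) ^ 2 + ‖b - c‖ ^ 2 := by ring
    have am3 : (ℓ * ‖b - a‖ + 2 * δ) ^ 2 ≤ 2 * ℓ ^ 2 * ‖b - a‖ ^ 2 + 8 * δ ^ 2 := by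
      have h11 := add_sq_le_two (ℓ * ‖b - a‖) (2 * δ)
      linarith [h11]
    have am3' := mul_le_mul_of_nonneg_left am3 (sq_nonneg α)
    have cs2' : 2 * α * ⟪gt b - gt a, b - c⟫ ≤ 2 * α * ((ℓ * ‖b - a‖ + 2 * δ) * ‖b - c‖) :=
      mul_le_mul_of_nonneg_left cs2 (by positivity)
    have bnd3 : 2 * α * ⟪gt b - gt a, b - c⟫
        ≤ α ^ 2 * (2 * ℓ ^ 2 * ‖b - a‖ ^ 2 + 8 * δ ^ 2) + ‖b - c‖ ^ 2 := by
      linarith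
    have main : ‖zs - c‖ ^ 2 ≤ ‖a - zs‖ ^ 2 - ‖a - c‖ ^ 2 + 2 * α * ⟪gt b, zs - c⟫ := by
      have h6 := mul_le_mul_of_nonneg_left P2' (by norm_num : (0:ℝ) ≤ 2)
      linarith [id1]
    have hP1'' : 2 * α * ⟪gt a, b - c⟫ ≤ -(2 * ⟪a - b, c - b⟫) := by
      rw [hg1]
      have h7 := mul_le_mul_of_nonneg_left P1' (by norm_num : (0:ℝ) ≤ 2)
      linarith [h7]
    have total : ‖zs - c‖ ^ 2 ≤ ‖a - zs‖ ^ 2 - ‖a - b‖ ^ 2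
        + α ^ 2 * (2 * ℓ ^ 2 * ‖a - b‖ ^ 2 + 8 * δ ^ 2)
        - α * μ * ‖zs - b‖ ^ 2 + α * (δ ^ 2 / μ) := by
      rw [nrev3] at bnd3
      have hdec : 2 * α * ⟪gt b, zs - c⟫ = 2 * α * ⟪gt b, zs - b⟫
          + 2 * α * ⟪gt a, b - c⟫ + 2 * α * ⟪gt b - gt a, b - c⟫ := by
        rw [dec1, dec2]; ring
      rw [nrev2] at id2
      linarith [bnd1, hP1'', bnd3, id2, main, hdec]
    have hsq : α ^ 2 * (2 * ℓ ^ 2) = 1 / 2 := by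
      have h8 : α ^ 2 * (2 * ℓ ^ 2) = 2 * (α * ℓ) ^ 2 := by ring
      rw [h8, hαℓ]; norm_num
    have tri : ‖a - zs‖ ≤ ‖a - b‖ + ‖zs - b‖ := by
      have h7 : a - zs = (a - b) + (b - zs) := by abel
      calc ‖a - zs‖ = ‖(a - b) + (b - zs)‖ := by rw [← h7]
        _ ≤ ‖a - b‖ + ‖b - zs‖ := norm_add_le _ _
        _ = ‖a - b‖ + ‖zs - b‖ := by rw [nrev1]
    have tri2 : ‖a - zs‖ ^ 2 ≤ 2 * ‖a - b‖ ^ 2 + 2 * ‖zs - b‖ ^ 2 :=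
      sq_le_two_sq_add_two_sq (norm_nonneg _) tri
    have contr : α * μ / 2 * ‖a - zs‖ ^ 2 ≤ 1 / 2 * ‖a - b‖ ^ 2 + α * μ * ‖zs - b‖ ^ 2 := by
      have h4 := mul_le_mul_of_nonneg_left tri2 (by positivity : (0:ℝ) ≤ α * μ / 2)
      have h5 := mul_nonneg (by linarith [hαμ] : (0:ℝ) ≤ 1 / 2 - α * μ)
        (sq_nonneg ‖a - b‖)
      linarith [h4, h5]
    show ‖c - zs‖ ^ 2 ≤ (1 - μ * α / 2) * ‖a - zs‖ ^ 2 + δ ^ 2 * (8 * α ^ 2 + α / μ)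
    rw [nrev4]
    have hexpand : α ^ 2 * (2 * ℓ ^ 2 * ‖a - b‖ ^ 2 + 8 * δ ^ 2)
        = 1 / 2 * ‖a - b‖ ^ 2 + 8 * α ^ 2 * δ ^ 2 := by
      have h9 : α ^ 2 * (2 * ℓ ^ 2 * ‖a - b‖ ^ 2 + 8 * δ ^ 2)
          = (α ^ 2 * (2 * ℓ ^ 2)) * ‖a - b‖ ^ 2 + 8 * α ^ 2 * δ ^ 2 := by ring
      rw [h9, hsq]
    rw [hexpand] at total
    have hconv : α * (δ ^ 2 / μ) = δ ^ 2 * (α / μ) := by ring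
    linarith only [total, contr, hconv]
  -- recursion
  have hr0 : (0:ℝ) ≤ 1 - μ * α / 2 := by linarith [hαμ]
  have hcδ0 : (0:ℝ) ≤ δ ^ 2 * (8 * α ^ 2 + α / μ) := by positivity
  have hD0 : (0:ℝ) ≤ 2 * (δ ^ 2 * (8 * α ^ 2 + α / μ)) / (μ * α) := by positivity
  have hDc : δ ^ 2 * (8 * α ^ 2 + α / μ)
      ≤ (1 - (1 - μ * α / 2)) * (2 * (δ ^ 2 * (8 * α ^ 2 + α / μ)) / (μ * α)) := by
    have heq : (1 - (1 - μ * α / 2)) * (2 * (δ ^ 2 * (8 * α ^ 2 + α / μ)) / (μ * α))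
        = δ ^ 2 * (8 * α ^ 2 + α / μ) := by
      field_simp
      ring
    rw [heq]
  have inv := rec_bound (u := fun t => ‖z t - zs‖ ^ 2) hr0 hDc hD0 T step
  have hfin := inv T le_rfl
  -- compare with exp
  have hκ0 : (0:ℝ) < κ := by rw [hκ]; positivity
  have hre : 1 - μ * α / 2 = 1 - 1 / (4 * κ) := by
    rw [hκ, hα]; field_simp; ring
  have hrexp : 1 - μ * α / 2 ≤ Real.exp (-(1 / (8 * κ))) := by
    have h5 := Real.add_one_le_exp (-(1 / (8 * κ)))
    have h6 : 1 / (8 * κ) ≤ 1 / (4 * κ) := by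
      apply one_div_le_one_div_of_le (by positivity) (by linarith)
    rw [hre]; linarith
  have hpow : (1 - μ * α / 2) ^ T ≤ Real.exp (-(T : ℝ) / (8 * κ)) := by
    calc (1 - μ * α / 2) ^ T ≤ (Real.exp (-(1 / (8 * κ)))) ^ T :=
          pow_le_pow_left₀ hr0 hrexp T
      _ = Real.exp ((T : ℝ) * -(1 / (8 * κ))) := by rw [← Real.exp_nat_mul]
      _ = Real.exp (-(T : ℝ) / (8 * κ)) := by congr 1; ring
  have hu0 : (0:ℝ) ≤ ‖z 0 - zs‖ ^ 2 := sq_nonneg _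
  have hDle : 2 * (δ ^ 2 * (8 * α ^ 2 + α / μ)) / (μ * α) ≤ 8 * δ ^ 2 / μ * (2 / ℓ + 1 / μ) := by
    rw [hα]
    have hdiff : 8 * δ ^ 2 / μ * (2 / ℓ + 1 / μ)
        - 2 * (δ ^ 2 * (8 * (1 / (2 * ℓ)) ^ 2 + (1 / (2 * ℓ)) / μ)) / (μ * (1 / (2 * ℓ)))
        = 8 * δ ^ 2 / (μ * ℓ) + 6 * δ ^ 2 / μ ^ 2 := by
      field_simp
      ring
    have hpos : (0:ℝ) ≤ 8 * δ ^ 2 / (μ * ℓ) + 6 * δ ^ 2 / μ ^ 2 := by positivity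
    linarith
  have hmul := mul_le_mul_of_nonneg_right hpow hu0
  linarith [hfin, hmul, hDle]
end
end

section
/- Let E and E' be real Hilbert spaces, X ⊆ E and Y ⊆ E' nonempty closed convex sets each of diameter at most D, and f : E × E' → ℝ a function that is μ-strongly-convex–strongly-concave on X × Y and whose saddle operator G(x,y) = (∇_x f(x,y), −∇_y f(x,y)) is ℓ-Lipschitz on X × Y, with 0 < μ ≤ ℓ. Let z* ∈ X × Y be a saddle point of f on X × Y. Let δ ≥ 0 and let g̃ : E × E' → E × E' satisfy ‖g̃(z) − G(z)‖ ≤ δ for all z ∈ X × Y. Let ẑ ∈ X × Y, β ≥ 2ℓ, and define [ẑ]_β = Π_{X×Y}(ẑ − g̃(ẑ)/β). Then: (i) for every z ∈ X × Y, ⟪G([ẑ]_β), [ẑ]_β − z⟫ ≤ 2√2·β·D·‖ẑ − z*‖ + √2·δ·D·((2 + √2)·√(β/μ) + 3); and (ii) ‖[ẑ]_β − z*‖ ≤ (1 + √2·ℓ/β)·‖ẑ − z*‖ + δ·(1/√(βμ) + √2/β). -/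
open RealInnerProductSpace Topology
noncomputable section

/-- Variational inequality for a metric projection onto a convex set. -/
lemma isProjOn_inner_le {H : Type*} [NormedAddCommGroup H] [InnerProductSpace ℝ H]
    {S : Set H} (hS : Convex ℝ S) {v q : H} (hq : q ∈ S)
    (hmin : ∀ w ∈ S, ‖v - q‖ ≤ ‖v - w‖) :
    ∀ w ∈ S, ⟪v - q, w - q⟫ ≤ 0 := by
  intro w hw
  by_contra hc
  push_neg at hc
  set c : ℝ := ⟪v - q, w - q⟫ with hcdef
  set b : ℝ := ‖w - q‖ ^ 2 with hbdef
  have key : ∀ t : ℝ, 0 < t → t ≤ 1 → 2 * c ≤ t * b := by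
    intro t ht0 ht1
    have hmem : q + t • (w - q) ∈ S := by
      have h := hS hq hw (by linarith : (0:ℝ) ≤ 1 - t) ht0.le (by ring)
      convert h using 1
      module
    have h2 := hmin _ hmem
    have h2' : ‖v - q‖ ^ 2 ≤ ‖v - (q + t • (w - q))‖ ^ 2 :=
      pow_le_pow_left₀ (norm_nonneg _) h2 2
    have hexp : ‖v - (q + t • (w - q))‖ ^ 2 = ‖v - q‖ ^ 2 - 2 * t * c + t ^ 2 * b := by
      have hrw : v - (q + t • (w - q)) = (v - q) - t • (w - q) := by abel
      rw [hrw, norm_sub_sq_real, real_inner_smul_right, norm_smul]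
      simp only [Real.norm_eq_abs]
      rw [mul_pow, sq_abs]
      ring
    have h3 : 2 * t * c ≤ t ^ 2 * b := by linarith
    have h4 : t * (2 * c) ≤ t * (t * b) := by nlinarith
    exact le_of_mul_le_mul_left h4 ht0
  have hb0 : 0 ≤ b := sq_nonneg _
  have h1 := key 1 one_pos le_rfl
  have hbpos : 0 < b := by nlinarith
  have ht0 : 0 < c / b := div_pos hc hbpos
  have ht1 : c / b ≤ 1 := by rw [div_le_one hbpos]; nlinarith
  have := key (c / b) ht0 ht1
  rw [div_mul_cancel₀ _ hbpos.ne'] at this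
  linarith

/-- If a real function has nonnegative values to the right of `0` (compared to `0`),
its derivative at `0` is nonnegative. -/
lemma deriv_nonneg_of_min {φ : ℝ → ℝ} {c : ℝ} (hφ : HasDerivAt φ c 0)
    (h : ∀ t : ℝ, t ∈ Set.Ioc (0:ℝ) 1 → φ 0 ≤ φ t) : 0 ≤ c := by
  have hs := hasDerivAt_iff_tendsto_slope.mp hφ
  have hmono : 𝓝[>] (0:ℝ) ≤ 𝓝[≠] (0:ℝ) :=
    nhdsWithin_mono _ fun t ht => ne_of_gt ht
  refine ge_of_tendsto (hs.mono_left hmono) ?_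
  filter_upwards [Ioc_mem_nhdsGT_of_mem (Set.left_mem_Ico.2 one_pos)] with t ht
  have h2 := h t ht
  rw [slope_def_field]
  apply div_nonneg (by linarith) (by simpa using ht.1.le)

/-- Derivative of a function along a line, in terms of the gradient. -/
lemma hasDerivAt_line {H : Type*} [NormedAddCommGroup H] [InnerProductSpace ℝ H]
    [CompleteSpace H] {φ : H → ℝ} {a : H} (hd : DifferentiableAt ℝ φ a) (v : H) :
    HasDerivAt (fun t : ℝ => φ (a + t • v)) ⟪gradient φ a, v⟫ 0 := by
  have hF : HasFDerivAt φ (InnerProductSpace.toDual ℝ H (gradient φ a)) a :=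
    hd.hasGradientAt.hasFDerivAt
  have hg : HasDerivAt (fun t : ℝ => a + t • v) v 0 := by
    simpa using ((hasDerivAt_id (0:ℝ)).smul_const v).const_add a
  have hF' : HasFDerivAt φ (InnerProductSpace.toDual ℝ H (gradient φ a))
      ((fun t : ℝ => a + t • v) 0) := by simpa using hF
  have := hF'.comp_hasDerivAt 0 hg
  simpa [Function.comp_def, InnerProductSpace.toDual_apply_apply] using this

variable {E E' : Type*} [NormedAddCommGroup E] [InnerProductSpace ℝ E] [CompleteSpace E]
  [NormedAddCommGroup E'] [InnerProductSpace ℝ E'] [CompleteSpace E']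

set_option maxHeartbeats 2000000 in
/-- Lemma C.3.  One inexact GDA step `[ẑ]_β = Π_{X×Y}(ẑ − g̃(ẑ)/β)` with
`β ≥ 2ℓ` satisfies, for every `z ∈ X × Y`:
(i) `⟪G([ẑ]_β), [ẑ]_β − z⟫ ≤ 2√2·β·D·‖ẑ − z*‖ + √2·δ·D·((2 + √2)·√(β/μ) + 3)`; and
(ii) `‖[ẑ]_β − z*‖ ≤ (1 + √2·ℓ/β)·‖ẑ − z*‖ + δ·(1/√(βμ) + √2/β)`. -/
theorem inexact_gda_step_stopping_criterion
    (X : Set E) (Y : Set E') (hXne : X.Nonempty) (hYne : Y.Nonempty)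
    (hXcl : IsClosed X) (hYcl : IsClosed Y) (hXcv : Convex ℝ X) (hYcv : Convex ℝ Y)
    (D : ℝ) (hXD : ∀ s₁ ∈ X, ∀ s₂ ∈ X, ‖s₁ - s₂‖ ≤ D) (hYD : ∀ s₁ ∈ Y, ∀ s₂ ∈ Y, ‖s₁ - s₂‖ ≤ D)
    (f : E × E' → ℝ) (μ ℓ : ℝ) (hμ : 0 < μ) (hμℓ : μ ≤ ℓ)
    (hdx : ∀ x ∈ X, ∀ y ∈ Y, DifferentiableAt ℝ (fun u => f (u, y)) x)
    (hdy : ∀ x ∈ X, ∀ y ∈ Y, DifferentiableAt ℝ (fun v => f (x, v)) y)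
    (hscx : ∀ y ∈ Y, ConvexOn ℝ X (fun x => f (x, y) - μ / 2 * ‖x‖ ^ 2))
    (hscy : ∀ x ∈ X, ConvexOn ℝ Y (fun y => -f (x, y) - μ / 2 * ‖y‖ ^ 2))
    (hlip : ∀ z₁ ∈ prodSet X Y, ∀ z₂ ∈ prodSet X Y,
      ‖saddleOp f z₁ - saddleOp f z₂‖ ≤ ℓ * ‖z₁ - z₂‖)
    (zs : WithLp 2 (E × E')) (hzsS : zs ∈ prodSet X Y)
    (hsaddle : ∀ x ∈ X, ∀ y ∈ Y,
      f ((WithLp.equiv 2 (E × E') zs).1, y) ≤ f (WithLp.equiv 2 (E × E') zs) ∧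
      f (WithLp.equiv 2 (E × E') zs) ≤ f (x, (WithLp.equiv 2 (E × E') zs).2))
    (δ : ℝ) (hδ : 0 ≤ δ)
    (gt : WithLp 2 (E × E') → WithLp 2 (E × E'))
    (hgt : ∀ z ∈ prodSet X Y, ‖gt z - saddleOp f z‖ ≤ δ)
    (zh : WithLp 2 (E × E')) (hzh : zh ∈ prodSet X Y)
    (β : ℝ) (hβ : 2 * ℓ ≤ β)
    (p : WithLp 2 (E × E')) (hp : IsProjOn (prodSet X Y) (zh - β⁻¹ • gt zh) p) :
    (∀ z ∈ prodSet X Y,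
      ⟪saddleOp f p, p - z⟫ ≤
        2 * Real.sqrt 2 * β * D * ‖zh - zs‖ +
          Real.sqrt 2 * δ * D * ((2 + Real.sqrt 2) * Real.sqrt (β / μ) + 3)) ∧
    ‖p - zs‖ ≤ (1 + Real.sqrt 2 * ℓ / β) * ‖zh - zs‖ +
      δ * (1 / Real.sqrt (β * μ) + Real.sqrt 2 / β) := by
  classical
  obtain ⟨hpS, hpmin⟩ := hp
  set T := prodSet X Y with hT
  set G := saddleOp f with hG
  -- basic positivity facts
  have hℓpos : 0 < ℓ := lt_of_lt_of_le hμ hμℓ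
  have hβpos : 0 < β := lt_of_lt_of_le (by linarith) hβ
  have hD0 : 0 ≤ D := by
    obtain ⟨x0, hx0⟩ := hXne
    have := hXD x0 hx0 x0 hx0
    simpa using this
  have hs2 : (Real.sqrt 2) ^ 2 = 2 := Real.sq_sqrt (by norm_num)
  have hs2ge : 1 ≤ Real.sqrt 2 := by nlinarith [Real.sqrt_nonneg 2]
  have hs2le : Real.sqrt 2 ≤ 2 := by nlinarith [Real.sqrt_nonneg 2]
  -- membership components
  have hxs : (WithLp.equiv 2 (E × E') zs).1 ∈ X := hzsS.1
  have hys : (WithLp.equiv 2 (E × E') zs).2 ∈ Y := hzsS.2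
  -- convexity of T
  have hTcv : Convex ℝ T := by
    intro a ha b hb s t hs ht hst
    exact ⟨hXcv ha.1 hb.1 hs ht hst, hYcv ha.2 hb.2 hs ht hst⟩
  -- diameter of T
  have diam2 : ∀ a ∈ T, ∀ b ∈ T, ‖a - b‖ ≤ Real.sqrt 2 * D := by
    intro a ha b hb
    have hsq : ‖a - b‖ ^ 2 ≤ 2 * D ^ 2 := by
      rw [WithLp.prod_norm_sq_eq_of_L2]
      have h1 : ‖(a - b).fst‖ ≤ D := hXD _ ha.1 _ hb.1
      have h2 : ‖(a - b).snd‖ ≤ D := hYD _ ha.2 _ hb.2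
      nlinarith [norm_nonneg (a - b).fst, norm_nonneg (a - b).snd]
    have := Real.sqrt_le_sqrt hsq
    rw [Real.sqrt_sq (norm_nonneg _)] at this
    calc ‖a - b‖ ≤ Real.sqrt (2 * D ^ 2) := this
      _ = Real.sqrt 2 * D := by
          rw [Real.sqrt_mul (by norm_num), Real.sqrt_sq hD0]
  -- variational inequality at the saddle point zs
  have hVI : ∀ w ∈ T, 0 ≤ ⟪G zs, w - zs⟫ := by
    intro w hw
    have hVIx : 0 ≤ ⟪gradient (fun u => f (u, (WithLp.equiv 2 (E × E') zs).2))
        (WithLp.equiv 2 (E × E') zs).1, (w - zs).fst⟫ := by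
      apply deriv_nonneg_of_min (hasDerivAt_line (hdx _ hxs _ hys) _)
      intro t ht
      have hmem : (WithLp.equiv 2 (E × E') zs).1 + t • (w - zs).fst ∈ X := by
        have h := hXcv hxs hw.1 (by linarith [ht.2] : (0:ℝ) ≤ 1 - t) ht.1.le (by ring)
        have heq : (WithLp.equiv 2 (E × E') zs).1 + t • (w - zs).fst =
            (1 - t) • (WithLp.equiv 2 (E × E') zs).1 + t • (WithLp.equiv 2 (E × E') w).1 := by
          have h1 : (w - zs).fst = (WithLp.equiv 2 (E × E') w).1 - (WithLp.equiv 2 (E × E') zs).1 := rfl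
          rw [h1]; module
        rw [heq]; exact h
      have h2 := (hsaddle _ hmem _ hys).2
      simp only [zero_smul, add_zero, Prod.mk.eta]; exact h2
    have hVIy : ⟪gradient (fun v => f ((WithLp.equiv 2 (E × E') zs).1, v))
        (WithLp.equiv 2 (E × E') zs).2, (w - zs).snd⟫ ≤ 0 := by
      have hneg : (0:ℝ) ≤ -⟪gradient (fun v => f ((WithLp.equiv 2 (E × E') zs).1, v))
          (WithLp.equiv 2 (E × E') zs).2, (w - zs).snd⟫ := by
        apply deriv_nonneg_of_min (hasDerivAt_line (hdy _ hxs _ hys) _).neg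
        intro t ht
        have hmem : (WithLp.equiv 2 (E × E') zs).2 + t • (w - zs).snd ∈ Y := by
          have h := hYcv hys hw.2 (by linarith [ht.2] : (0:ℝ) ≤ 1 - t) ht.1.le (by ring)
          have heq : (WithLp.equiv 2 (E × E') zs).2 + t • (w - zs).snd =
              (1 - t) • (WithLp.equiv 2 (E × E') zs).2 + t • (WithLp.equiv 2 (E × E') w).2 := by
            have h1 : (w - zs).snd = (WithLp.equiv 2 (E × E') w).2 - (WithLp.equiv 2 (E × E') zs).2 := rfl
            rw [h1]; module
          rw [heq]; exact h
        have h2 := (hsaddle _ hxs _ hmem).1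
        simp only [Pi.neg_apply, zero_smul, add_zero, Prod.mk.eta, neg_le_neg_iff]; exact h2
      linarith
    have hinner : ⟪G zs, w - zs⟫ =
        ⟪gradient (fun u => f (u, (WithLp.equiv 2 (E × E') zs).2))
          (WithLp.equiv 2 (E × E') zs).1, (w - zs).fst⟫ +
        ⟪-(gradient (fun v => f ((WithLp.equiv 2 (E × E') zs).1, v))
          (WithLp.equiv 2 (E × E') zs).2), (w - zs).snd⟫ := by
      rw [hG, saddleOp, WithLp.prod_inner_apply]; rfl
    rw [hinner, inner_neg_left]
    linarith
  -- projection variational inequality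
  have hproj : ∀ w ∈ T, ⟪(zh - β⁻¹ • gt zh) - p, w - p⟫ ≤ 0 :=
    isProjOn_inner_le hTcv hpS hpmin
  -- part (ii)
  have hgtzs : ‖gt zh - G zs‖ ≤ δ + ℓ * ‖zh - zs‖ := by
    calc ‖gt zh - G zs‖ ≤ ‖gt zh - G zh‖ + ‖G zh - G zs‖ := by
          have he : gt zh - G zs = (gt zh - G zh) + (G zh - G zs) := by abel
          rw [he]; exact norm_add_le _ _
      _ ≤ δ + ℓ * ‖zh - zs‖ := add_le_add (hgt zh hzh) (hlip zh hzh zs hzsS)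
  have hr_le : ‖p - zs‖ ≤ ‖zh - zs‖ + β⁻¹ * (δ + ℓ * ‖zh - zs‖) := by
    have h1 : ⟪(zh - β⁻¹ • gt zh) - p, zs - p⟫ ≤ 0 := hproj zs hzsS
    have h2 : ⟪(zs - β⁻¹ • G zs) - zs, p - zs⟫ ≤ 0 := by
      have he : (zs - β⁻¹ • G zs) - zs = -(β⁻¹ • G zs) := by abel
      rw [he, inner_neg_left, real_inner_smul_left]
      have h3 := hVI p hpS
      have hβinv : (0:ℝ) ≤ β⁻¹ := by positivity
      have h4 := mul_nonneg hβinv h3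
      linarith
    have key : ‖p - zs‖ ^ 2 ≤ ⟪(zh - β⁻¹ • gt zh) - (zs - β⁻¹ • G zs), p - zs⟫ := by
      have e1 : (zh - β⁻¹ • gt zh) - (zs - β⁻¹ • G zs) =
          ((zh - β⁻¹ • gt zh) - p) + (p - zs) + (zs - (zs - β⁻¹ • G zs)) := by abel
      have h1' : 0 ≤ ⟪(zh - β⁻¹ • gt zh) - p, p - zs⟫ := by
        rw [show p - zs = -(zs - p) by abel, inner_neg_right]; linarith
      have h2' : 0 ≤ ⟪zs - (zs - β⁻¹ • G zs), p - zs⟫ := by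
        rw [show zs - (zs - β⁻¹ • G zs) = -((zs - β⁻¹ • G zs) - zs) by abel,
          inner_neg_left]
        linarith
      rw [e1, inner_add_left, inner_add_left, real_inner_self_eq_norm_sq]
      linarith
    have hCS := real_inner_le_norm ((zh - β⁻¹ • gt zh) - (zs - β⁻¹ • G zs)) (p - zs)
    have hnorm : ‖p - zs‖ ≤ ‖(zh - β⁻¹ • gt zh) - (zs - β⁻¹ • G zs)‖ := by
      rcases eq_or_lt_of_le (norm_nonneg (p - zs)) with h0 | h0
      · exact le_trans (le_of_eq h0.symm) (norm_nonneg _)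
      · by_contra hcon
        push_neg at hcon
        have h9 := mul_lt_mul_of_pos_left hcon h0
        nlinarith [key, hCS]
    have huv : ‖(zh - β⁻¹ • gt zh) - (zs - β⁻¹ • G zs)‖ ≤
        ‖zh - zs‖ + β⁻¹ * (δ + ℓ * ‖zh - zs‖) := by
      have e : (zh - β⁻¹ • gt zh) - (zs - β⁻¹ • G zs) =
          (zh - zs) - β⁻¹ • (gt zh - G zs) := by rw [smul_sub]; abel
      rw [e]
      calc ‖(zh - zs) - β⁻¹ • (gt zh - G zs)‖
          ≤ ‖zh - zs‖ + ‖β⁻¹ • (gt zh - G zs)‖ := norm_sub_le _ _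
        _ ≤ ‖zh - zs‖ + β⁻¹ * (δ + ℓ * ‖zh - zs‖) := by
            rw [norm_smul, Real.norm_eq_abs, abs_of_nonneg (by positivity : (0:ℝ) ≤ β⁻¹)]
            exact add_le_add le_rfl (mul_le_mul_of_nonneg_left hgtzs (by positivity))
    linarith
  have hii : ‖p - zs‖ ≤ (1 + Real.sqrt 2 * ℓ / β) * ‖zh - zs‖ +
      δ * (1 / Real.sqrt (β * μ) + Real.sqrt 2 / β) := by
    have hd0 : 0 ≤ ‖zh - zs‖ := norm_nonneg _
    have hsβμ : (0:ℝ) ≤ 1 / Real.sqrt (β * μ) := by positivity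
    have hβinv : (0:ℝ) ≤ β⁻¹ := by positivity
    have t1 : 0 ≤ (Real.sqrt 2 - 1) * (ℓ * ‖zh - zs‖) * β⁻¹ :=
      mul_nonneg (mul_nonneg (sub_nonneg.2 hs2ge) (mul_nonneg hℓpos.le hd0)) hβinv
    have t2 : 0 ≤ (Real.sqrt 2 - 1) * δ * β⁻¹ :=
      mul_nonneg (mul_nonneg (sub_nonneg.2 hs2ge) hδ) hβinv
    have t3 : 0 ≤ δ * (1 / Real.sqrt (β * μ)) := mul_nonneg hδ hsβμ
    have hdiv1 : Real.sqrt 2 * ℓ / β = Real.sqrt 2 * ℓ * β⁻¹ := by ring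
    have hdiv2 : Real.sqrt 2 / β = Real.sqrt 2 * β⁻¹ := by ring
    rw [hdiv1, hdiv2]
    linarith [hr_le, t1, t2, t3]
  refine ⟨?_, hii⟩
  -- part (i)
  intro z hz
  set d := ‖zh - zs‖ with hd
  set r := ‖p - zs‖ with hrdef
  have hd0 : 0 ≤ d := norm_nonneg _
  have hr0 : 0 ≤ r := norm_nonneg _
  have hℓβ : ℓ ≤ β / 2 := by linarith
  have hsplit : ⟪G p, p - z⟫ = ⟪G p - G zs, p - z⟫ + ⟪G zs, p - zs⟫ + ⟪G zs, zs - z⟫ := by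
    have h1 : ⟪G zs, p - zs⟫ + ⟪G zs, zs - z⟫ = ⟪G zs, p - z⟫ := by
      rw [← inner_add_right]; congr 1; abel
    rw [inner_sub_left, ← h1]; ring
  have hT1 : ⟪G p - G zs, p - z⟫ ≤ (ℓ * r) * (Real.sqrt 2 * D) := by
    calc ⟪G p - G zs, p - z⟫ ≤ ‖G p - G zs‖ * ‖p - z‖ := real_inner_le_norm _ _
      _ ≤ (ℓ * r) * (Real.sqrt 2 * D) :=
          mul_le_mul (hlip p hpS zs hzsS) (diam2 p hpS z hz) (norm_nonneg _)
            (mul_nonneg hℓpos.le hr0)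
  have hT3 : ⟪G zs, zs - z⟫ ≤ 0 := by
    rw [show zs - z = -(z - zs) by abel, inner_neg_right]
    linarith [hVI z hz]
  have hT2 : ⟪G zs, p - zs⟫ ≤ ℓ * d * r + δ * r + β * d ^ 2 / 2 := by
    have e : ⟪G zs, p - zs⟫ =
        ⟪G zs - G zh, p - zs⟫ + ⟪G zh - gt zh, p - zs⟫ + ⟪gt zh, p - zs⟫ := by
      rw [inner_sub_left, inner_sub_left]; ring
    have b1 : ⟪G zs - G zh, p - zs⟫ ≤ ℓ * d * r := by
      calc ⟪G zs - G zh, p - zs⟫ ≤ ‖G zs - G zh‖ * ‖p - zs‖ := real_inner_le_norm _ _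
        _ ≤ ℓ * d * r := by
            apply mul_le_mul_of_nonneg_right _ (norm_nonneg _)
            calc ‖G zs - G zh‖ ≤ ℓ * ‖zs - zh‖ := hlip zs hzsS zh hzh
              _ = ℓ * d := by rw [norm_sub_rev]
    have b2 : ⟪G zh - gt zh, p - zs⟫ ≤ δ * r := by
      calc ⟪G zh - gt zh, p - zs⟫ ≤ ‖G zh - gt zh‖ * ‖p - zs‖ := real_inner_le_norm _ _
        _ ≤ δ * r := mul_le_mul_of_nonneg_right
            (by rw [norm_sub_rev]; exact hgt zh hzh) (norm_nonneg _)
    have b3 : ⟪gt zh, p - zs⟫ ≤ β * d ^ 2 / 2 := by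
      have hp0 := hproj zs hzsS
      rw [show (zh - β⁻¹ • gt zh) - p = (zh - p) - β⁻¹ • gt zh by abel,
        inner_sub_left, real_inner_smul_left] at hp0
      have hz1 : ⟪gt zh, p - zs⟫ = -⟪gt zh, zs - p⟫ := by
        rw [show p - zs = -(zs - p) by abel, inner_neg_right]
      have hz2 : ⟪zh - p, zs - p⟫ = -⟪zh - p, p - zs⟫ := by
        rw [show zs - p = -(p - zs) by abel, inner_neg_right]
      have hq : 2 * ⟪zh - p, p - zs⟫ ≤ d ^ 2 := by
        have hnm := norm_add_sq_real (zh - p) (p - zs)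
        rw [show (zh - p) + (p - zs) = zh - zs by abel] at hnm
        rw [hd]
        linarith [hnm, sq_nonneg ‖zh - p‖, sq_nonneg ‖p - zs‖]
      have h5 : -⟪zh - p, p - zs⟫ ≤ β⁻¹ * ⟪gt zh, zs - p⟫ := by linarith
      have h6 : -(β * ⟪zh - p, p - zs⟫) ≤ ⟪gt zh, zs - p⟫ := by
        have h7 := mul_le_mul_of_nonneg_left h5 hβpos.le
        rw [← mul_assoc, mul_inv_cancel₀ hβpos.ne', one_mul] at h7
        linarith
      rw [hz1]
      have h8 : β * (2 * ⟪zh - p, p - zs⟫) ≤ β * d ^ 2 :=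
        mul_le_mul_of_nonneg_left hq hβpos.le
      linarith
    rw [e]; linarith
  -- assemble part (i)
  set R := (1 + Real.sqrt 2 * ℓ / β) * d + δ * (1 / Real.sqrt (β * μ) + Real.sqrt 2 / β)
    with hR
  have hrR : r ≤ R := hii
  have hrD : r ≤ Real.sqrt 2 * D := diam2 p hpS zs hzsS
  have hdD : d ≤ Real.sqrt 2 * D := diam2 zh hzh zs hzsS
  have hR0 : 0 ≤ R := le_trans hr0 hrR
  have hs2D : (0:ℝ) ≤ Real.sqrt 2 * D := mul_nonneg (Real.sqrt_nonneg 2) hD0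
  have m1 : (ℓ * r) * (Real.sqrt 2 * D) ≤ (β / 2 * R) * (Real.sqrt 2 * D) :=
    mul_le_mul_of_nonneg_right (mul_le_mul hℓβ hrR hr0 (by linarith)) hs2D
  have m2 : ℓ * d * r ≤ (β / 2) * d * (Real.sqrt 2 * D) := by
    have := mul_le_mul (mul_le_mul_of_nonneg_right hℓβ hd0) hrD hr0
      (mul_nonneg (by linarith) hd0)
    linarith
  have m3 : δ * r ≤ δ * (Real.sqrt 2 * D) := mul_le_mul_of_nonneg_left hrD hδ
  have m4 : β * d ^ 2 / 2 ≤ (β / 2) * (Real.sqrt 2 * D) * d := by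
    nlinarith [mul_nonneg (mul_nonneg (sub_nonneg.2 hdD) hd0) hβpos.le]
  have hβμpos : (0:ℝ) < Real.sqrt (β * μ) := Real.sqrt_pos.2 (by positivity)
  have hsβ : Real.sqrt (β / μ) = β * (1 / Real.sqrt (β * μ)) := by
    rw [show β / μ = β ^ 2 / (β * μ) by field_simp,
      Real.sqrt_div (by positivity) _, Real.sqrt_sq hβpos.le]
    ring
  have hq0 : (0:ℝ) ≤ Real.sqrt (β / μ) := Real.sqrt_nonneg _
  have hexp : β / 2 * R = β / 2 * d + Real.sqrt 2 * ℓ * d / 2 +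
      δ * Real.sqrt (β / μ) / 2 + Real.sqrt 2 * δ / 2 := by
    rw [hR, hsβ]
    field_simp
    ring
  have hfinal_inner : β / 2 * R + β / 2 * d + δ + β / 2 * d ≤
      2 * β * d + δ * ((2 + Real.sqrt 2) * Real.sqrt (β / μ) + 3) := by
    rw [hexp]
    nlinarith [mul_le_mul_of_nonneg_right
        (mul_le_mul_of_nonneg_left hℓβ (Real.sqrt_nonneg 2)) hd0,
      mul_nonneg (mul_nonneg (sub_nonneg.2 hs2le) hβpos.le) hd0,
      mul_nonneg hδ hq0, mul_nonneg (sub_nonneg.2 hs2le) hδ]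
  calc ⟪G p, p - z⟫
      = ⟪G p - G zs, p - z⟫ + ⟪G zs, p - zs⟫ + ⟪G zs, zs - z⟫ := hsplit
    _ ≤ (ℓ * r) * (Real.sqrt 2 * D) + (ℓ * d * r + δ * r + β * d ^ 2 / 2) + 0 := by
        linarith
    _ ≤ (β / 2 * R) * (Real.sqrt 2 * D) + ((β / 2) * d * (Real.sqrt 2 * D) +
        δ * (Real.sqrt 2 * D) + (β / 2) * (Real.sqrt 2 * D) * d) + 0 := by
        linarith
    _ = (β / 2 * R + β / 2 * d + δ + β / 2 * d) * (Real.sqrt 2 * D) := by ring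
    _ ≤ (2 * β * d + δ * ((2 + Real.sqrt 2) * Real.sqrt (β / μ) + 3)) *
        (Real.sqrt 2 * D) := mul_le_mul_of_nonneg_right hfinal_inner hs2D
    _ = 2 * Real.sqrt 2 * β * D * d +
        Real.sqrt 2 * δ * D * ((2 + Real.sqrt 2) * Real.sqrt (β / μ) + 3) := by ring
end
end
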